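/- Suppose formal power series U, Q, P1 over ℚ[y,a,b] in t satisfy U = 1 + yabQ^2/(1-abQ^2), Q = tU^2(1+aQ)(1+bQ), and (U-1)Q = tU(U-1)(1+aQ)(1+bQ) + ytUabQ(Q - P1), where U has constant term 1 and Q, P1 have constant term 0. Then P1 = Q - yabQ^3(1+aQ)(1+bQ)/(1-abQ^2)^2. -/

import Mathlib

/-- The coefficient ring `ℚ[y,a,b]`. -/
abbrev Ryab : Type := MvPolynomial (Fin 3) ℚ

/-- The ring `ℚ[y,a,b][[t]]`. -/
abbrev Fish : Type := PowerSeries Ryab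

noncomputable def yv : Fish := (PowerSeries.C (R := Ryab)) (MvPolynomial.X 0)
noncomputable def av : Fish := (PowerSeries.C (R := Ryab)) (MvPolynomial.X 1)
noncomputable def bv : Fish := (PowerSeries.C (R := Ryab)) (MvPolynomial.X 2)
noncomputable def tv : Fish := PowerSeries.X

lemma yv_ne : (yv : Fish) ≠ 0 := by
  intro h
  have := congrArg (PowerSeries.constantCoeff (R := Ryab)) h
  simp [yv] at this

lemma av_ne : (av : Fish) ≠ 0 := by
  intro h
  have := congrArg (PowerSeries.constantCoeff (R := Ryab)) h
  simp [av] at this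

lemma bv_ne : (bv : Fish) ≠ 0 := by
  intro h
  have := congrArg (PowerSeries.constantCoeff (R := Ryab)) h
  simp [bv] at this

/-- Kernel method for fighting fish, final step: the generating series `P1 = P(1)` is given by
`P1 = Q - yabQ^3(1+aQ)(1+bQ)/(1-abQ^2)^2` (stated multiplicatively; `1 - abQ^2` is
invertible since `abQ^2` has zero constant term). -/
theorem kernel_final_step (U Q P1 : Fish)
    (hU0 : PowerSeries.constantCoeff (R := Ryab) U = 1)
    (hQ0 : PowerSeries.constantCoeff (R := Ryab) Q = 0)
    (hP10 : PowerSeries.constantCoeff (R := Ryab) P1 = 0)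
    (hU : (U - 1) * (1 - av * bv * Q ^ 2) = yv * av * bv * Q ^ 2)
    (hQ : Q = tv * U ^ 2 * (1 + av * Q) * (1 + bv * Q))
    (h3 : (U - 1) * Q = tv * U * (U - 1) * (1 + av * Q) * (1 + bv * Q)
        + yv * tv * U * av * bv * Q * (Q - P1)) :
    P1 * (1 - av * bv * Q ^ 2) ^ 2
      = Q * (1 - av * bv * Q ^ 2) ^ 2
        - yv * av * bv * Q ^ 3 * (1 + av * Q) * (1 + bv * Q) := by
  have hQne : Q ≠ 0 := by
    intro h
    subst h
    simp only [mul_zero, zero_mul, mul_one, add_zero, zero_pow] at hQ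
    have hUne : U ≠ 0 := by
      intro h; rw [h] at hU0; simp at hU0
    have htne : (tv : Fish) ≠ 0 := PowerSeries.X_ne_zero
    exact mul_ne_zero htne (pow_ne_zero 2 hUne) hQ.symm
  set K : Fish := 1 - av * bv * Q ^ 2 with hK
  have key : yv * av * bv * Q ^ 2 *
      ((Q - P1) * K ^ 2 - yv * av * bv * Q ^ 3 * (1 + av * Q) * (1 + bv * Q)) = 0 := by
    linear_combination (- K ^ 2 * U * (1 + av * Q) * (1 + bv * Q)) * h3
      + (K ^ 2 * ((U - 1) * (1 + av * Q) * (1 + bv * Q) + yv * av * bv * Q * (Q - P1))) * hQ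
      + (Q * (1 + av * Q) * (1 + bv * Q) * ((U - 1) * K + yv * av * bv * Q ^ 2)) * hU
  have hfac : (yv * av * bv * Q ^ 2 : Fish) ≠ 0 :=
    mul_ne_zero (mul_ne_zero (mul_ne_zero yv_ne av_ne) bv_ne) (pow_ne_zero 2 hQne)
  have h0 : (Q - P1) * K ^ 2 - yv * av * bv * Q ^ 3 * (1 + av * Q) * (1 + bv * Q) = 0 :=
    (mul_eq_zero.mp key).resolve_left hfac
  linear_combination -h0
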